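/- arXiv:2506.09297 — 2 statements merged into one kernel-verified Lean document; each statement's English description precedes it below -/
import Mathlib

section
/- Let μ be a d×N real matrix with Cᵀ S μ + μᵀ S C = 0. Set A = Cᵀ S μ and W = μᵀ S μ, let B be the 2N×2N block matrix B = [[A, −W],[Id_N, A]], let [C μ] be the d×2N matrix whose first N columns are those of C and last N columns those of μ, and let J be the 2N×N matrix consisting of Id_N stacked above the N×N zero matrix. Then the d×N matrix X = [C μ] · exp(B) · J · exp(−A), where exp denotes the matrix exponential, satisfies Xᵀ S X = Id_N; that is, the Stiefel geodesic formula produces a point of the generalized Stiefel manifold. -/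
open Matrix NormedSpace

/-- If `M * B = B' * M` then `M * exp B = exp B' * M`. -/
lemma semiconj_exp_aux {n : Type*} [Fintype n] [DecidableEq n]
    (M B B' : Matrix n n ℝ) (h : M * B = B' * M) :
    M * NormedSpace.exp B = NormedSpace.exp B' * M := by
  letI : SeminormedRing (Matrix n n ℝ) := Matrix.linftyOpSemiNormedRing
  letI : NormedRing (Matrix n n ℝ) := Matrix.linftyOpNormedRing
  letI : NormedAlgebra ℝ (Matrix n n ℝ) := Matrix.linftyOpNormedAlgebra
  have hp : ∀ k : ℕ, M * B ^ k = B' ^ k * M := by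
    intro k
    induction k with
    | zero => simp
    | succ k ih =>
      rw [pow_succ, ← mul_assoc, ih, mul_assoc, h, ← mul_assoc, ← pow_succ]
  simp only [exp_eq_tsum (𝕂 := ℝ)]
  erw [← Summable.tsum_mul_left M (expSeries_summable' (𝕂 := ℝ) B),
    ← Summable.tsum_mul_right M (expSeries_summable' (𝕂 := ℝ) B')]
  congr 1
  funext k
  rw [mul_smul_comm, hp k, smul_mul_assoc]

lemma exp_mul_exp_neg_aux {n : Type*} [Fintype n] [DecidableEq n]
    (Y : Matrix n n ℝ) : NormedSpace.exp Y * NormedSpace.exp (-Y) = 1 := by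
  rw [← Matrix.exp_add_of_commute Y (-Y) (Commute.neg_right (Commute.refl Y)), add_neg_cancel,
    exp_zero]

/-- The Stiefel geodesic formula
`X = [C μ] · exp([[A, −W],[Id, A]]) · [Id; 0] · exp(−A)`, with `A = Cᵀ S μ` and
`W = μᵀ S μ`, produces a point of the generalized Stiefel manifold: `Xᵀ S X = Id`. -/
theorem stmt11 {d N : ℕ} (hd : 0 < d) (hN : 0 < N) (hNd : N ≤ d)
    (S : Matrix (Fin d) (Fin d) ℝ) (hS : Sᵀ = S)
    (C : Matrix (Fin d) (Fin N) ℝ) (hC : Cᵀ * S * C = 1)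
    (μ : Matrix (Fin d) (Fin N) ℝ) (hμ : Cᵀ * S * μ + μᵀ * S * C = 0)
    (X : Matrix (Fin d) (Fin N) ℝ)
    (hX : X = Matrix.fromCols C μ *
        NormedSpace.exp (Matrix.fromBlocks (Cᵀ * S * μ) (-(μᵀ * S * μ)) 1 (Cᵀ * S * μ)) *
        Matrix.fromRows (1 : Matrix (Fin N) (Fin N) ℝ) (0 : Matrix (Fin N) (Fin N) ℝ) *
        NormedSpace.exp (-(Cᵀ * S * μ))) :
    Xᵀ * S * X = 1 := by
  set A : Matrix (Fin N) (Fin N) ℝ := Cᵀ * S * μ with hA_def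
  set W : Matrix (Fin N) (Fin N) ℝ := μᵀ * S * μ with hW_def
  have hμSC : μᵀ * S * C = -A := eq_neg_of_add_eq_zero_right hμ
  have hAT : Aᵀ = -A := by
    rw [hA_def, Matrix.transpose_mul, Matrix.transpose_mul, Matrix.transpose_transpose, hS,
      ← Matrix.mul_assoc, hμSC]
  have hWT : Wᵀ = W := by
    rw [hW_def, Matrix.transpose_mul, Matrix.transpose_mul, Matrix.transpose_transpose, hS,
      Matrix.mul_assoc]
  set B : Matrix (Fin N ⊕ Fin N) (Fin N ⊕ Fin N) ℝ := Matrix.fromBlocks A (-W) 1 A with hB_def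
  set M : Matrix (Fin N ⊕ Fin N) (Fin N ⊕ Fin N) ℝ := Matrix.fromBlocks 1 A (-A) W with hM_def
  have hBT : Bᵀ = Matrix.fromBlocks Aᵀ 1 (-W)ᵀ Aᵀ := by
    rw [hB_def, Matrix.fromBlocks_transpose, Matrix.transpose_one]
  have hsemi : M * B = (-Bᵀ) * M := by
    rw [hBT, hM_def, hB_def, Matrix.fromBlocks_neg, Matrix.fromBlocks_multiply,
      Matrix.fromBlocks_multiply, hAT, Matrix.transpose_neg, hWT]
    congr 1 <;> noncomm_ring
  have key : M * NormedSpace.exp B = NormedSpace.exp (-Bᵀ) * M := semiconj_exp_aux M B (-Bᵀ) hsemi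
  have hexpM : (NormedSpace.exp B)ᵀ * (M * NormedSpace.exp B) = M := by
    rw [key, ← Matrix.exp_transpose, ← mul_assoc, exp_mul_exp_neg_aux, one_mul]
  have hCM : (Matrix.fromCols C μ)ᵀ * S * Matrix.fromCols C μ = M := by
    rw [Matrix.transpose_fromCols, Matrix.fromRows_mul, Matrix.fromRows_mul_fromCols,
      hM_def, hC, ← hA_def, hμSC, ← hW_def]
  set J : Matrix (Fin N ⊕ Fin N) (Fin N) ℝ :=
    Matrix.fromRows (1 : Matrix (Fin N) (Fin N) ℝ) (0 : Matrix (Fin N) (Fin N) ℝ) with hJ_def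
  have hJMJ : Jᵀ * (M * J) = 1 := by
    rw [hJ_def, hM_def, Matrix.fromBlocks_mul_fromRows, Matrix.transpose_fromRows,
      Matrix.fromCols_mul_fromRows, Matrix.transpose_one, Matrix.transpose_zero]
    simp
  have hexpA : (NormedSpace.exp (-A))ᵀ * NormedSpace.exp (-A) = 1 := by
    rw [← Matrix.exp_transpose, Matrix.transpose_neg, hAT, neg_neg, exp_mul_exp_neg_aux]
  rw [hX]
  rw [Matrix.transpose_mul, Matrix.transpose_mul, Matrix.transpose_mul]
  calc (NormedSpace.exp (-A))ᵀ * (Jᵀ * ((NormedSpace.exp B)ᵀ * (Matrix.fromCols C μ)ᵀ)) * S *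
        (Matrix.fromCols C μ * NormedSpace.exp B * J * NormedSpace.exp (-A))
      = (NormedSpace.exp (-A))ᵀ * (Jᵀ * ((NormedSpace.exp B)ᵀ *
          ((Matrix.fromCols C μ)ᵀ * S * Matrix.fromCols C μ * NormedSpace.exp B) * J)) *
          NormedSpace.exp (-A) := by
        simp only [Matrix.mul_assoc]
    _ = (NormedSpace.exp (-A))ᵀ * NormedSpace.exp (-A) := by
        rw [hCM, hexpM, hJMJ, mul_one]
    _ = 1 := hexpA
end

section
/- Let O be an invertible d×d real matrix with Oᵀ S O = Id_d, and let η be a d×N real matrix with Cᵀ S η = 0. Suppose η = O U D V where U is a d×N real matrix with Uᵀ U = Id_N, V is an N×N orthogonal matrix (Vᵀ V = V Vᵀ = Id_N), and D = diag(σ₁,…,σ_N) is a diagonal N×N matrix (a thin singular value decomposition of O⁻¹η). Let cos(D) = diag(cos σ₁,…,cos σ_N) and sin(D) = diag(sin σ₁,…,sin σ_N). Then the d×N matrix X = (C Vᵀ cos(D) + O U sin(D)) V satisfies Xᵀ S X = Id_N; that is, the Grassmannian geodesic formula produces a point of the generalized Stiefel manifold. -/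
open Matrix

/-- The Grassmannian geodesic formula `X = (C Vᵀ cos(D) + O U sin(D)) V`, where
`η = O U D V` is a thin SVD of `O⁻¹ η` of a Grassmann tangent vector `η`,
produces a point of the generalized Stiefel manifold: `Xᵀ S X = Id`. -/
theorem stmt12 {d N : ℕ} (hd : 0 < d) (hN : 0 < N) (hNd : N ≤ d)
    (S : Matrix (Fin d) (Fin d) ℝ) (hS : Sᵀ = S)
    (C : Matrix (Fin d) (Fin N) ℝ) (hC : Cᵀ * S * C = 1)
    (O : Matrix (Fin d) (Fin d) ℝ) (hO : IsUnit O.det) (hOS : Oᵀ * S * O = 1)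
    (η : Matrix (Fin d) (Fin N) ℝ) (hη : Cᵀ * S * η = 0)
    (U : Matrix (Fin d) (Fin N) ℝ) (hU : Uᵀ * U = 1)
    (V : Matrix (Fin N) (Fin N) ℝ) (hV : Vᵀ * V = 1) (hV' : V * Vᵀ = 1)
    (σ : Fin N → ℝ) (hSVD : η = O * U * Matrix.diagonal σ * V)
    (X : Matrix (Fin d) (Fin N) ℝ)
    (hX : X = (C * Vᵀ * Matrix.diagonal (fun i => Real.cos (σ i)) +
        O * U * Matrix.diagonal (fun i => Real.sin (σ i))) * V) :
    Xᵀ * S * X = 1 := by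
  set cosD := Matrix.diagonal (fun i => Real.cos (σ i)) with hcos
  set sinD := Matrix.diagonal (fun i => Real.sin (σ i)) with hsin
  set M := Cᵀ * S * (O * U) with hMdef
  have hM : M * Matrix.diagonal σ = 0 := by
    have h0 : Cᵀ * S * (O * U * Matrix.diagonal σ * V) = 0 := by rw [← hSVD]; exact hη
    have h1 := congrArg (· * Vᵀ) h0
    simpa [hMdef, Matrix.mul_assoc, hV'] using h1
  have hMsin : M * sinD = 0 := by
    ext i j
    have hz : M i j * σ j = 0 := by
      have := congrFun (congrFun hM i) j
      simpa [Matrix.mul_diagonal] using this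
    rcases mul_eq_zero.mp hz with h | h
    · simp [hsin, Matrix.mul_diagonal, h]
    · simp [hsin, Matrix.mul_diagonal, h]
  have hsinM : sinD * Mᵀ = 0 := by
    have := congrArg Matrix.transpose hMsin
    simpa [Matrix.transpose_mul, hsin, Matrix.diagonal_transpose] using this
  have hMT : (O * U)ᵀ * S * C = Mᵀ := by
    rw [hMdef]
    simp [Matrix.transpose_mul, hS, Matrix.mul_assoc]
  have hOU : (O * U)ᵀ * S * (O * U) = 1 := by
    calc (O * U)ᵀ * S * (O * U) = Uᵀ * (Oᵀ * S * O) * U := by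
          simp [Matrix.transpose_mul, Matrix.mul_assoc]
      _ = Uᵀ * U := by rw [hOS]; simp
      _ = 1 := hU
  have hmid : (C * Vᵀ * cosD + O * U * sinD)ᵀ * S * (C * Vᵀ * cosD + O * U * sinD) = 1 := by
    have e : (C * Vᵀ * cosD + O * U * sinD)ᵀ * S * (C * Vᵀ * cosD + O * U * sinD)
        = cosD * V * (Cᵀ * S * C) * Vᵀ * cosD
          + cosD * V * (M * sinD)
          + (sinD * Mᵀ) * (Vᵀ * cosD)
          + sinD * ((O * U)ᵀ * S * (O * U)) * sinD := by
      rw [hMdef]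
      simp only [Matrix.transpose_add, Matrix.transpose_mul, Matrix.transpose_transpose,
        Matrix.diagonal_transpose, hS, Matrix.add_mul, Matrix.mul_add, hcos, hsin]
      noncomm_ring
      simp only [Matrix.mul_assoc]
      abel
    rw [e, hC, hMsin, hsinM, hOU]
    simp only [Matrix.mul_one, Matrix.mul_zero, Matrix.zero_mul, add_zero]
    rw [Matrix.mul_assoc cosD V Vᵀ, hV', Matrix.mul_one]
    rw [hcos, hsin, Matrix.diagonal_mul_diagonal, Matrix.diagonal_mul_diagonal,
      Matrix.diagonal_add, ← Matrix.diagonal_one]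
    refine congrArg Matrix.diagonal (funext fun i => ?_)
    simpa [sq] using Real.cos_sq_add_sin_sq (σ i)
  rw [hX]
  calc ((C * Vᵀ * cosD + O * U * sinD) * V)ᵀ * S * ((C * Vᵀ * cosD + O * U * sinD) * V)
      = Vᵀ * ((C * Vᵀ * cosD + O * U * sinD)ᵀ * S * (C * Vᵀ * cosD + O * U * sinD)) * V := by
        simp only [Matrix.transpose_mul, Matrix.mul_assoc]
    _ = 1 := by rw [hmid]; simpa using hV
end
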